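/- Let f: [0,1] → [0,∞) be continuous with f(0) = f(1) = 0, and define d(u,v) = f(u) + f(v) − 2·inf_{u ≤ s ≤ v} f(s) for u ≤ v (and symmetrically for v ≤ u). Then d is a premetric on [0,1]: it is nonnegative, symmetric, vanishes on the diagonal, and satisfies the triangle inequality. -/

import Mathlib

open Set

/-- The distance function coded by a continuous excursion `f : [0,1] → [0,∞)` with
`f(0) = f(1) = 0`, namely `d(u,v) = f(u) + f(v) − 2 inf_{u ≤ s ≤ v} f(s)` (and symmetrically
for `v ≤ u`), is a premetric on `[0,1]`: nonnegative, symmetric, vanishing on the diagonal,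
and satisfying the triangle inequality. -/
theorem excursion_premetric (f : ℝ → ℝ)
    (hcont : ContinuousOn f (Icc 0 1))
    (hnn : ∀ x ∈ Icc (0 : ℝ) 1, 0 ≤ f x)
    (hf0 : f 0 = 0) (hf1 : f 1 = 0)
    (d : ℝ → ℝ → ℝ)
    (hd : ∀ u v : ℝ, u ≤ v → d u v = f u + f v - 2 * sInf (f '' Icc u v))
    (hdsymm : ∀ u v : ℝ, d u v = d v u) :
    (∀ u ∈ Icc (0 : ℝ) 1, d u u = 0) ∧
    (∀ u ∈ Icc (0 : ℝ) 1, ∀ v ∈ Icc (0 : ℝ) 1, 0 ≤ d u v) ∧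
    (∀ u ∈ Icc (0 : ℝ) 1, ∀ v ∈ Icc (0 : ℝ) 1, d u v = d v u) ∧
    (∀ u ∈ Icc (0 : ℝ) 1, ∀ v ∈ Icc (0 : ℝ) 1, ∀ w ∈ Icc (0 : ℝ) 1,
      d u w ≤ d u v + d v w) := by
  -- bounded below
  have hbdd : ∀ a b : ℝ, a ∈ Icc (0:ℝ) 1 → b ∈ Icc (0:ℝ) 1 → BddBelow (f '' Icc a b) := by
    intro a b ha hb
    refine ⟨0, ?_⟩
    rintro y ⟨x, hx, rfl⟩
    exact hnn x ⟨le_trans ha.1 hx.1, le_trans hx.2 hb.2⟩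
  -- inf ≤ value at any point
  have hle : ∀ a b x : ℝ, a ∈ Icc (0:ℝ) 1 → b ∈ Icc (0:ℝ) 1 → x ∈ Icc a b →
      sInf (f '' Icc a b) ≤ f x := fun a b x ha hb hx =>
    csInf_le (hbdd a b ha hb) ⟨x, hx, rfl⟩
  -- monotonicity of inf under set inclusion
  have hmono : ∀ a b c e : ℝ, c ∈ Icc (0:ℝ) 1 → e ∈ Icc (0:ℝ) 1 → Icc a b ⊆ Icc c e →
      (Icc a b).Nonempty → sInf (f '' Icc c e) ≤ sInf (f '' Icc a b) := by
    intro a b c e hc he hsub hne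
    exact csInf_le_csInf (hbdd c e hc he) (hne.image f) (image_mono (f := f) hsub)
  have hdiag : ∀ u ∈ Icc (0:ℝ) 1, d u u = 0 := by
    intro u _
    rw [hd u u le_rfl, Icc_self, image_singleton, csInf_singleton]
    ring
  have hnneg : ∀ u ∈ Icc (0:ℝ) 1, ∀ v ∈ Icc (0:ℝ) 1, 0 ≤ d u v := by
    have base : ∀ u ∈ Icc (0:ℝ) 1, ∀ v ∈ Icc (0:ℝ) 1, u ≤ v → 0 ≤ d u v := by
      intro u hu v hv huv
      rw [hd u v huv]
      have h1 := hle u v u hu hv ⟨le_rfl, huv⟩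
      have h2 := hle u v v hu hv ⟨huv, le_rfl⟩
      linarith
    intro u hu v hv
    rcases le_total u v with h | h
    · exact base u hu v hv h
    · rw [hdsymm]; exact base v hv u hu h
  refine ⟨hdiag, hnneg, fun u _ v _ => hdsymm u v, ?_⟩
  -- triangle inequality, first for u ≤ w
  have key : ∀ u ∈ Icc (0:ℝ) 1, ∀ v ∈ Icc (0:ℝ) 1, ∀ w ∈ Icc (0:ℝ) 1,
      u ≤ w → d u w ≤ d u v + d v w := by
    intro u hu v hv w hw huw
    rcases le_total v u with hvu | huv
    · -- v ≤ u ≤ w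
      rw [hd u w huw, hdsymm u v, hd v u hvu, hd v w (hvu.trans huw)]
      have h1 := hle v u v hv hu ⟨le_rfl, hvu⟩
      have h2 := hmono u w v w hv hw (Icc_subset_Icc hvu le_rfl) (nonempty_Icc.mpr huw)
      linarith
    · rcases le_total v w with hvw | hwv
      · -- u ≤ v ≤ w : split the infimum
        rw [hd u w huw, hd u v huv, hd v w hvw]
        have hsplit : min (sInf (f '' Icc u v)) (sInf (f '' Icc v w)) ≤ sInf (f '' Icc u w) := by
          apply le_csInf ((nonempty_Icc.mpr huw).image f)
          rintro y ⟨x, hx, rfl⟩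
          rcases le_total x v with h | h
          · exact le_trans (min_le_left _ _) (csInf_le (hbdd u v hu hv) ⟨x, ⟨hx.1, h⟩, rfl⟩)
          · exact le_trans (min_le_right _ _) (csInf_le (hbdd v w hv hw) ⟨x, ⟨h, hx.2⟩, rfl⟩)
        have h1 := hle u v v hu hv ⟨huv, le_rfl⟩
        have h2 := hle v w v hv hw ⟨le_rfl, hvw⟩
        rcases min_cases (sInf (f '' Icc u v)) (sInf (f '' Icc v w)) with ⟨he, _⟩ | ⟨he, _⟩ <;>
          rw [he] at hsplit <;> linarith
      · -- u ≤ w ≤ v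
        rw [hd u w huw, hd u v (huw.trans hwv), hdsymm v w, hd w v hwv]
        have h1 := hle w v v hw hv ⟨hwv, le_rfl⟩
        have h2 := hmono u w u v hu hv (Icc_subset_Icc le_rfl hwv) (nonempty_Icc.mpr huw)
        linarith
  intro u hu v hv w hw
  rcases le_total u w with h | h
  · exact key u hu v hv w hw h
  · rw [hdsymm u w, hdsymm u v, hdsymm v w]
    have := key w hw v hv u hu h
    linarith
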